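/- Let $X$ be a topological space and $Y$ a second countable space. Then every $H_\sigma$-measurable map $f : X \to Y$ is $\sigma$-regular. -/

import Mathlib

universe u

open Filter Topology Set

/-- `A` is an `H`-set (resolvable in the sense of Hausdorff). -/
def HSet {X : Type*} [TopologicalSpace X] (A : Set X) : Prop :=
  ∀ F : Set X, IsClosed F →
    IsNowhereDense
      ((Subtype.val ⁻¹' (closure (F ∩ A) ∩ closure (F \ A))) : Set F)

/-- `f` is `H_σ`-measurable: preimages of open sets are countable unions of
`H`-sets. -/
def HSigmaMeasurable {X Y : Type*} [TopologicalSpace X] [TopologicalSpace Y]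
    (f : X → Y) : Prop :=
  ∀ V : Set Y, IsOpen V →
    ∃ B : ℕ → Set X, (∀ n, HSet (B n)) ∧ f ⁻¹' V = ⋃ n, B n

/-- A regular transfinite sequence of open sets on `[0, α]`. -/
def IsRegularSeq {X : Type*} [TopologicalSpace X]
    (α : Ordinal) (U : Ordinal → Set X) : Prop :=
  (∀ ξ, IsOpen (U ξ)) ∧ U 0 = ∅ ∧
  (∀ ξ η, ξ ≤ η → U ξ ⊆ U η) ∧ U α = Set.univ ∧
  ∀ γ < α, Order.IsSuccLimit γ → U γ = ⋃ ξ : Set.Iio γ, U ξ.val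

/-- The regular partition associated with a regular sequence. -/
def regularPieces {X : Type*} [TopologicalSpace X]
    (α : Ordinal) (U : Ordinal → Set X) : Set (Set X) :=
  { S | ∃ ξ < α, S = U (ξ + 1) \ U ξ }

/-- A family `𝓑` is a base for `f`. -/
def IsBaseFor {X Y : Type*} [TopologicalSpace X] [TopologicalSpace Y]
    (f : X → Y) (𝓑 : Set (Set X)) : Prop :=
  ∀ V : Set Y, IsOpen V → ∃ S ⊆ 𝓑, f ⁻¹' V = ⋃₀ S

/-- `f` is σ-regular. -/
def SigmaRegular {X : Type u} {Y : Type*} [TopologicalSpace X] [TopologicalSpace Y]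
    (f : X → Y) : Prop :=
  ∃ (a : ℕ → Ordinal.{u}) (U : ℕ → Ordinal.{u} → Set X),
    (∀ n, IsRegularSeq (a n) (U n)) ∧
    IsBaseFor f (⋃ n, regularPieces (a n) (U n))

section HAux

noncomputable def stepA {X : Type u} [TopologicalSpace X] (A : Set X) (p : Set X × Bool) :
    Set X × Bool :=
  (if p.2 then p.1 ∩ closure (p.1 \ A) else closure (p.1 ∩ A), !p.2)

noncomputable def gA {X : Type u} [TopologicalSpace X] (A : Set X) (o : Ordinal.{u}) :
    Set X × Bool :=
  Ordinal.limitRecOn o ((Set.univ : Set X), false) (fun _ p => stepA A p)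
    (fun o _ ih => (⋂ p : Set.Iio o, (ih p.1 p.2).1, false))

noncomputable def FA {X : Type u} [TopologicalSpace X] (A : Set X) (o : Ordinal.{u}) : Set X :=
  (gA A o).1

variable {X : Type u} [TopologicalSpace X] (A : Set X)

lemma gA_zero : gA A 0 = (Set.univ, false) := Ordinal.limitRecOn_zero _ _ _

lemma gA_succ (o : Ordinal.{u}) : gA A (o + 1) = stepA A (gA A o) := by
  rw [Ordinal.add_one_eq_succ]; exact Ordinal.limitRecOn_succ _ _ _ _

lemma gA_succ_snd (o : Ordinal.{u}) : (gA A (o + 1)).2 = !(gA A o).2 := by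
  rw [gA_succ]; rfl

lemma FA_zero : FA A 0 = Set.univ := by rw [FA, gA_zero]

lemma FA_succ (o : Ordinal.{u}) :
    FA A (o + 1) =
      if (gA A o).2 then FA A o ∩ closure (FA A o \ A) else closure (FA A o ∩ A) := by
  rw [FA, gA_succ]; rfl

lemma FA_limit {o : Ordinal.{u}} (h : Order.IsSuccLimit o) :
    FA A o = ⋂ p : Set.Iio o, FA A p.1 := by
  unfold FA gA
  rw [Ordinal.limitRecOn_limit _ _ _ _ h]

lemma isClosed_FA (o : Ordinal.{u}) : IsClosed (FA A o) := by
  induction o using Ordinal.limitRecOn with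
  | zero => rw [FA_zero]; exact isClosed_univ
  | add_one o ih =>
      rw [FA_succ]
      split
      · exact ih.inter isClosed_closure
      · exact isClosed_closure
  | limit o ho ih =>
      rw [FA_limit A ho]
      exact isClosed_iInter fun p => ih p.1 p.2

lemma FA_succ_subset (o : Ordinal.{u}) : FA A (o + 1) ⊆ FA A o := by
  rw [FA_succ]
  split
  · exact Set.inter_subset_left
  · exact (closure_mono Set.inter_subset_left).trans
      (isClosed_FA A o).closure_subset

lemma FA_antitone {o₁ : Ordinal.{u}} : ∀ {o₂ : Ordinal.{u}}, o₁ ≤ o₂ → FA A o₂ ⊆ FA A o₁ := by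
  intro o₂
  induction o₂ using Ordinal.limitRecOn with
  | zero => intro h; rw [nonpos_iff_eq_zero.mp h]
  | add_one o ih =>
      intro h
      rcases eq_or_lt_of_le h with h' | h'
      · rw [← h']
      · have hs : FA A (o + 1) ⊆ FA A o := by
          exact FA_succ_subset A o
        exact hs.trans (ih (Order.lt_add_one_iff.mp h'))
  | limit o ho _ =>
      intro h
      rcases eq_or_lt_of_le h with h' | h'
      · rw [← h']
      · rw [FA_limit A ho]
        exact Set.iInter_subset (fun p : Set.Iio o => FA A p.1) ⟨o₁, h'⟩

lemma FA_piece (o : Ordinal.{u}) :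
    FA A o \ FA A (o + 1) ⊆ A ∨ (FA A o \ FA A (o + 1)) ∩ A = ∅ := by
  rw [FA_succ]
  by_cases hb : (gA A o).2
  · left
    rw [if_pos hb]
    rintro x ⟨hx, hx'⟩
    by_contra hxA
    exact hx' ⟨hx, subset_closure ⟨hx, hxA⟩⟩
  · right
    rw [if_neg hb, Set.eq_empty_iff_forall_notMem]
    rintro x ⟨⟨hx, hx'⟩, hxA⟩
    exact hx' (subset_closure ⟨hx, hxA⟩)

lemma FA_key (hA : HSet A) {F₀ : Set X} (hF : IsClosed F₀)
    (h1 : F₀ ⊆ closure (F₀ ∩ A)) (h2 : F₀ ⊆ closure (F₀ \ A)) : F₀ = ∅ := by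
  have h := hA F₀ hF
  have huniv : ((Subtype.val ⁻¹' (closure (F₀ ∩ A) ∩ closure (F₀ \ A))) : Set F₀)
      = Set.univ := by
    ext x
    simp only [Set.mem_preimage, Set.mem_inter_iff, Set.mem_univ, iff_true]
    exact ⟨h1 x.2, h2 x.2⟩
  rw [huniv, IsNowhereDense, closure_univ, interior_univ, Set.univ_eq_empty_iff,
    Set.isEmpty_coe_sort] at h
  exact h


lemma FA_strict (hA : HSet A) (o : Ordinal.{u}) (h : FA A (o + 1 + 1) = FA A o) :
    FA A o = ∅ := by
  have h1 : FA A (o + 1) = FA A o :=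
    subset_antisymm (FA_succ_subset A o) (h ▸ FA_succ_subset A (o + 1))
  by_cases hb : (gA A o).2
  · have e1 : FA A (o + 1) = FA A o ∩ closure (FA A o \ A) := by
      rw [FA_succ, if_pos hb]
    have hb' : (gA A (o + 1)).2 = false := by rw [gA_succ_snd, hb]; rfl
    have e2 : FA A (o + 1 + 1) = closure (FA A (o + 1) ∩ A) := by
      rw [FA_succ, hb']; rfl
    refine FA_key A hA (isClosed_FA A o) ?_ ?_
    · have : FA A o = closure (FA A o ∩ A) :=
        calc FA A o = FA A (o + 1 + 1) := h.symm
          _ = closure (FA A (o + 1) ∩ A) := e2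
          _ = closure (FA A o ∩ A) := by rw [h1]
      exact this.subset
    · have h3 : FA A o = FA A o ∩ closure (FA A o \ A) := h1.symm.trans e1
      exact fun x hx => (h3.subset hx).2
  · have e1 : FA A (o + 1) = closure (FA A o ∩ A) := by
      rw [FA_succ, if_neg hb]
    have hb' : (gA A (o + 1)).2 = true := by
      rw [gA_succ_snd]; simp [hb]
    have e2 : FA A (o + 1 + 1) = FA A (o + 1) ∩ closure (FA A (o + 1) \ A) := by
      rw [FA_succ, hb']; rfl
    refine FA_key A hA (isClosed_FA A o) ?_ ?_
    · exact (h1.symm.trans e1).subset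
    · have h3 : FA A o = FA A o ∩ closure (FA A o \ A) :=
        calc FA A o = FA A (o + 1 + 1) := h.symm
          _ = FA A (o + 1) ∩ closure (FA A (o + 1) \ A) := e2
          _ = FA A o ∩ closure (FA A o \ A) := by rw [h1]
      exact fun x hx => (h3.subset hx).2

lemma FA_exists_empty (hA : HSet A) : ∃ α : Ordinal.{u}, FA A α = ∅ := by
  by_contra hc
  push_neg at hc
  have key : ∀ a b : Ordinal.{u}, a < b → gA A a = gA A b → False := by
    intro a b hab he
    by_cases hb : b = a + 1
    · subst hb
      have h2 := gA_succ_snd A a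
      rw [← he] at h2
      exact (Bool.not_ne_self (gA A a).2).symm h2
    · have h1' : a + 1 ≤ b := by
        rw [Ordinal.add_one_eq_succ, Order.succ_le_iff]; exact hab
      have h1'' : a + 1 < b := lt_of_le_of_ne h1' fun e => hb e.symm
      have h2 : a + 1 + 1 ≤ b := by
        rw [Ordinal.add_one_eq_succ (a + 1), Order.succ_le_iff]; exact h1''
      have hFab : FA A a = FA A b := congrArg Prod.fst he
      have haa : a ≤ a + 1 + 1 :=
        (le_self_add (a := a) (b := 1)).trans (le_self_add (a := a + 1) (b := 1))
      have hstep : FA A (a + 1 + 1) = FA A a := by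
        refine subset_antisymm (FA_antitone A haa) ?_
        rw [hFab]
        exact FA_antitone A h2
      exact (hc a).ne_empty (FA_strict A hA a hstep)
  apply not_injective_of_ordinal (gA A)
  intro a b he
  rcases lt_trichotomy a b with h | h | h
  · exact absurd he fun e => key a b h e
  · exact h
  · exact absurd he.symm fun e => key b a h e
lemma FA_compl_diff (ξ : Ordinal.{u}) :
    (FA A (ξ + 1))ᶜ \ (FA A ξ)ᶜ = FA A ξ \ FA A (ξ + 1) := by
  ext x; simp only [Set.mem_diff, Set.mem_compl_iff, not_not]; tauto

lemma hset_decomp (hA : HSet A) :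
    ∃ (α : Ordinal.{u}) (U : Ordinal.{u} → Set X), IsRegularSeq α U ∧
      A = ⋃₀ {P | P ∈ regularPieces α U ∧ P ⊆ A} := by
  obtain ⟨α, hα⟩ := FA_exists_empty A hA
  refine ⟨α, fun o => (FA A o)ᶜ, ⟨fun ξ => (isClosed_FA A ξ).isOpen_compl, ?_, ?_, ?_, ?_⟩, ?_⟩
  · show (FA A 0)ᶜ = ∅
    rw [FA_zero, Set.compl_univ]
  · intro ξ η h
    exact Set.compl_subset_compl.mpr (FA_antitone A h)
  · show (FA A α)ᶜ = Set.univ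
    rw [hα, Set.compl_empty]
  · intro γ _ hγ
    show (FA A γ)ᶜ = ⋃ ξ : Set.Iio γ, (FA A ξ.1)ᶜ
    rw [FA_limit A hγ, Set.compl_iInter]
  · ext x
    simp only [Set.mem_sUnion, Set.mem_setOf_eq]
    constructor
    · intro hx
      set s : Set Ordinal.{u} := {ξ | x ∉ FA A ξ} with hs_def
      have hs : s.Nonempty := ⟨α, by simp [hs_def, hα]⟩
      have hmem : sInf s ∈ s := csInf_mem hs
      rcases Ordinal.zero_or_succ_or_isSuccLimit (sInf s) with h0 | ⟨η, hηs⟩ | hlim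
      · exact absurd (by rw [FA_zero]; exact Set.mem_univ x) (h0 ▸ hmem)
      · have hηlt : η < sInf s := hηs ▸ Order.lt_succ η
        have hxη : x ∈ FA A η := by
          by_contra hcon
          exact absurd (csInf_le (OrderBot.bddBelow s) hcon) (not_le_of_gt hηlt)
        have hxσ : x ∉ FA A (η + 1) := by
          rw [Ordinal.add_one_eq_succ, hηs]; exact hmem
        have hsα : sInf s ≤ α := csInf_le (OrderBot.bddBelow s) (by simp [hs_def, hα])
        have hηα : η < α := lt_of_lt_of_le hηlt hsα
        rcases FA_piece A η with hsub | hdis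
        · refine ⟨FA A η \ FA A (η + 1), ⟨?_, hsub⟩, hxη, hxσ⟩
          exact ⟨η, hηα, (FA_compl_diff A η).symm⟩
        · exact absurd (show x ∈ (FA A η \ FA A (η + 1)) ∩ A from ⟨⟨hxη, hxσ⟩, hx⟩)
            (by rw [hdis]; exact Set.notMem_empty x)
      · exfalso
        have := hmem
        rw [hs_def, Set.mem_setOf_eq, FA_limit A hlim] at this
        simp only [Set.mem_iInter, not_forall] at this
        obtain ⟨⟨η, hη⟩, hxn⟩ := this
        exact absurd (csInf_le (OrderBot.bddBelow s) hxn) (not_le_of_gt hη)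
    · rintro ⟨P, ⟨_, hPA⟩, hxP⟩
      exact hPA hxP

end HAux

theorem hSigmaMeasurable_sigmaRegular
    {X Y : Type*} [TopologicalSpace X] [TopologicalSpace Y]
    [SecondCountableTopology Y]
    (f : X → Y) (hf : HSigmaMeasurable f) :
    SigmaRegular f := by
  classical
  -- countable family of open sets forming a base of Y
  obtain ⟨V, hV⟩ :=
    ((TopologicalSpace.countable_countableBasis Y).insert ∅).exists_eq_range
      (Set.insert_nonempty _ _)
  have hVopen : ∀ n, IsOpen (V n) := by
    intro n
    have : V n ∈ insert ∅ (TopologicalSpace.countableBasis Y) := by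
      rw [hV]; exact Set.mem_range_self n
    rcases this with h | h
    · rw [h]; exact isOpen_empty
    · exact (TopologicalSpace.isBasis_countableBasis Y).isOpen h
  have hVbase : ∀ (W : Set Y) (y : Y), IsOpen W → y ∈ W → ∃ n, y ∈ V n ∧ V n ⊆ W := by
    intro W y hW hy
    obtain ⟨b, hb, hyb, hbW⟩ :=
      (TopologicalSpace.isBasis_countableBasis Y).exists_subset_of_mem_open hy hW
    have : b ∈ Set.range V := by rw [← hV]; exact Set.mem_insert_of_mem _ hb
    obtain ⟨n, rfl⟩ := this
    exact ⟨n, hyb, hbW⟩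
  choose B hBH hBU using fun n => hf (V n) (hVopen n)
  choose α U hreg hdec using fun n m => hset_decomp (B n m) (hBH n m)
  let d : ℕ → ℕ × ℕ := fun k => (Denumerable.eqv (ℕ × ℕ)).symm k
  have hd : ∀ p : ℕ × ℕ, ∃ k, d k = p := fun p =>
    ⟨Denumerable.eqv (ℕ × ℕ) p, Equiv.symm_apply_apply _ p⟩
  refine ⟨fun k => α (d k).1 (d k).2, fun k => U (d k).1 (d k).2,
    fun k => hreg (d k).1 (d k).2, ?_⟩
  intro W hW
  refine ⟨{P : Set X | ∃ n m, P ∈ regularPieces (α n m) (U n m) ∧ P ⊆ B n m ∧ V n ⊆ W},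
    ?_, ?_⟩
  · rintro P ⟨n, m, hP, -, -⟩
    obtain ⟨k, hk⟩ := hd (n, m)
    refine Set.mem_iUnion.mpr ⟨k, ?_⟩
    show P ∈ regularPieces (α (d k).1 (d k).2) (U (d k).1 (d k).2)
    rw [hk]
    exact hP
  · ext x
    simp only [Set.mem_preimage, Set.mem_sUnion, Set.mem_setOf_eq]
    constructor
    · intro hx
      obtain ⟨n, hyn, hnW⟩ := hVbase W (f x) hW hx
      have hxn : x ∈ ⋃ m, B n m := by rw [← hBU n]; exact hyn
      obtain ⟨m, hm⟩ := Set.mem_iUnion.mp hxn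
      have := hdec n m
      rw [this] at hm
      obtain ⟨P, ⟨hPp, hPB⟩, hxP⟩ := hm
      exact ⟨P, ⟨n, m, hPp, hPB, hnW⟩, hxP⟩
    · rintro ⟨P, ⟨n, m, -, hPB, hnW⟩, hxP⟩
      have : x ∈ f ⁻¹' V n := by
        rw [hBU n]
        exact Set.mem_iUnion.mpr ⟨m, hPB hxP⟩
      exact hnW this
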